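/- In the setting of Lemma A.2, let h be a bounded measurable function with q_0 := inf{q(x) : x ∈ supp(h)} > 0. Then for all k ∈ ℕ*, E^x (∫_0^{T_1} h(X_s) ds)^k ≤ (k! ‖h‖_∞^{k−1} / q_0^{k−1}) · R_q*|h|(x). -/

import Mathlib

open MeasureTheory Filter Set

noncomputable section

open intervalIntegral Topology
open scoped ENNReal NNReal

namespace Stmt16Aux

lemma intInt {u : ℝ → ℝ} (hu : Measurable u) {K : ℝ} (hK : ∀ t, |u t| ≤ K) (a b : ℝ) :
    IntervalIntegrable u volume a b := by
  rw [intervalIntegrable_iff]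
  have : IsFiniteMeasure (volume.restrict (Set.uIoc a b)) :=
    ⟨by rw [Measure.restrict_apply_univ]; exact measure_Ioc_lt_top⟩
  refine Integrable.mono' (integrable_const K) hu.aestronglyMeasurable ?_
  · exact Eventually.of_forall fun t => by simpa using hK t

lemma primCont {u : ℝ → ℝ} (hu : Measurable u) {K : ℝ} (hK : ∀ t, |u t| ≤ K) :
    Continuous fun t => ∫ s in (0:ℝ)..t, u s :=
  continuous_primitive (fun a b => intInt hu hK a b) 0

lemma locInt {u : ℝ → ℝ} (hu : Measurable u) {K : ℝ} (hK : ∀ t, |u t| ≤ K) :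
    LocallyIntegrable u volume := by
  intro x
  refine ⟨Icc (x-1) (x+1), Icc_mem_nhds (by linarith) (by linarith), ?_⟩
  have : IsFiniteMeasure (volume.restrict (Icc (x-1) (x+1))) :=
    ⟨by rw [Measure.restrict_apply_univ]; exact measure_Icc_lt_top⟩
  refine Integrable.mono' (integrable_const K) hu.aestronglyMeasurable ?_
  exact Eventually.of_forall fun t => by simpa using hK t


lemma contKey {u v : ℝ → ℝ} (hu : Continuous u) (hv : Continuous v)
    (hu0 : ∀ t, 0 ≤ u t) (hv0 : ∀ t, 0 ≤ v t) (j : ℕ) (T : ℝ) (hT : 0 ≤ T) :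
    ∫ t in (0:ℝ)..T, u t * Real.exp (-(∫ s in (0:ℝ)..t, u s)) * (∫ s in (0:ℝ)..t, v s) ^ j
      ≤ (j:ℝ) * (∫ t in (0:ℝ)..T, v t * Real.exp (-(∫ s in (0:ℝ)..t, u s))
          * (∫ s in (0:ℝ)..t, v s) ^ (j-1)) + (0:ℝ)^j := by
  set U : ℝ → ℝ := fun t => ∫ s in (0:ℝ)..t, u s with hU
  set V : ℝ → ℝ := fun t => ∫ s in (0:ℝ)..t, v s with hV
  have hUc : Continuous U := continuous_primitive (fun a b => hu.intervalIntegrable a b) 0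
  have hVc : Continuous V := continuous_primitive (fun a b => hv.intervalIntegrable a b) 0
  have hUd : ∀ t, HasDerivAt U (u t) t := fun t =>
    integral_hasDerivAt_right (hu.intervalIntegrable 0 t)
      hu.stronglyMeasurable.stronglyMeasurableAtFilter hu.continuousAt
  have hVd : ∀ t, HasDerivAt V (v t) t := fun t =>
    integral_hasDerivAt_right (hv.intervalIntegrable 0 t)
      hv.stronglyMeasurable.stronglyMeasurableAtFilter hv.continuousAt
  have hΦ : ∀ t, HasDerivAt (fun t => Real.exp (-U t) * V t ^ j)
      (v t * Real.exp (-U t) * ((j:ℕ) * V t ^ (j-1)) - u t * Real.exp (-U t) * V t ^ j) t := by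
    intro t
    have h1 : HasDerivAt (fun t => Real.exp (-U t)) (Real.exp (-U t) * (-u t)) t :=
      ((hUd t).neg).exp
    have h2 : HasDerivAt (fun t => V t ^ j) ((j:ℕ) * V t ^ (j-1) * v t) t := (hVd t).pow j
    have : HasDerivAt (fun t => Real.exp (-U t) * V t ^ j) (Real.exp (-U t) * (-u t) * V t ^ j
        + Real.exp (-U t) * ((j:ℕ) * V t ^ (j-1) * v t)) t := h1.mul h2
    convert this using 1
    ring
  have hint : IntervalIntegrable
      (fun t => v t * Real.exp (-U t) * ((j:ℕ) * V t ^ (j-1)) - u t * Real.exp (-U t) * V t ^ j)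
      volume 0 T := by
    apply Continuous.intervalIntegrable
    continuity
  have hftc := integral_eq_sub_of_hasDerivAt (fun t _ => hΦ t) hint
  have hint1 : IntervalIntegrable (fun t => v t * Real.exp (-U t) * ((j:ℕ) * V t ^ (j-1)))
      volume 0 T := by apply Continuous.intervalIntegrable; continuity
  have hint2 : IntervalIntegrable (fun t => u t * Real.exp (-U t) * V t ^ j) volume 0 T := by
    apply Continuous.intervalIntegrable; continuity
  rw [integral_sub hint1 hint2] at hftc
  have hV0 : V 0 = 0 := integral_same
  have hVT : 0 ≤ V T := integral_nonneg hT (fun s _ => hv0 s)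
  have hbd : 0 ≤ Real.exp (-U T) * V T ^ j := by positivity
  have heq : ∫ t in (0:ℝ)..T, v t * Real.exp (-U t) * ((j:ℕ) * V t ^ (j-1))
      = (j:ℝ) * ∫ t in (0:ℝ)..T, v t * Real.exp (-U t) * V t ^ (j-1) := by
    rw [← intervalIntegral.integral_const_mul]
    congr 1; funext t; ring
  have hU0 : U 0 = 0 := integral_same
  have h0 : Real.exp (-U 0) * V 0 ^ j = (0:ℝ)^j := by
    rw [hV0, hU0]; simp
  rw [heq, h0] at hftc
  show ∫ t in (0:ℝ)..T, u t * Real.exp (-U t) * V t ^ j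
      ≤ (j:ℝ) * (∫ t in (0:ℝ)..T, v t * Real.exp (-U t) * V t ^ (j-1)) + (0:ℝ)^j
  clear_value U V
  set Lu := ∫ t in (0:ℝ)..T, u t * Real.exp (-U t) * V t ^ j with hLu
  set Lv := ∫ t in (0:ℝ)..T, v t * Real.exp (-U t) * V t ^ (j-1) with hLv
  set eT := Real.exp (-U T) * V T ^ j with heT
  linarith [hbd, hftc]

def approx (u : ℝ → ℝ) (n : ℕ) (t : ℝ) : ℝ := ((n:ℝ)+1) * ∫ s in t..(t + ((n:ℝ)+1)⁻¹), u s

lemma aeTendsto {u : ℝ → ℝ} (hu : Measurable u) {K : ℝ} (hK : ∀ t, |u t| ≤ K)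
    (hloc : LocallyIntegrable u volume) :
    ∀ᵐ t, Tendsto (fun n : ℕ => approx u n t) atTop (𝓝 (u t)) := by
  filter_upwards [(IsUnifLocDoublingMeasure.vitaliFamily (volume : Measure ℝ) 1).ae_tendsto_average hloc] with x hx
  have hseq : Tendsto (fun n : ℕ => x + ((n:ℝ)+1)⁻¹) atTop (𝓝[>] x) := by
    apply tendsto_nhdsWithin_of_tendsto_nhds_of_eventually_within
    · have : Tendsto (fun n : ℕ => ((n:ℝ)+1)⁻¹) atTop (𝓝 0) := by
        simpa [one_div] using tendsto_one_div_add_atTop_nhds_zero_nat (𝕜 := ℝ)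
      simpa using tendsto_const_nhds.add this
    · filter_upwards with n
      have : (0:ℝ) < ((n:ℝ)+1)⁻¹ := by positivity
      simp only [mem_Ioi]; linarith
  have h2 := hx.comp ((Real.tendsto_Icc_vitaliFamily_right x).comp hseq)
  refine h2.congr fun n => ?_
  have hδ : (0:ℝ) < ((n:ℝ)+1)⁻¹ := by positivity
  have hle : x ≤ x + ((n:ℝ)+1)⁻¹ := by linarith
  simp only [Function.comp_apply]
  rw [setAverage_eq, integral_Icc_eq_integral_Ioc, measureReal_def, Real.volume_Icc, approx,
    ← integral_of_le hle]
  have : (x + ((n:ℝ)+1)⁻¹ - x) = ((n:ℝ)+1)⁻¹ := by ring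
  rw [this, ENNReal.toReal_ofReal hδ.le, smul_eq_mul, inv_inv]


variable {u : ℝ → ℝ} {K : ℝ}

lemma abs_bd (hu0 : ∀ t, 0 ≤ u t) (huK : ∀ t, u t ≤ K) : ∀ t, |u t| ≤ K := fun t => by
  rw [abs_of_nonneg (hu0 t)]; exact huK t

lemma approx_cont (hu : Measurable u) (hu0 : ∀ t, 0 ≤ u t) (huK : ∀ t, u t ≤ K) (n : ℕ) :
    Continuous (approx u n) := by
  have habs := abs_bd hu0 huK
  have hP : Continuous fun t => ∫ s in (0:ℝ)..t, u s :=
    continuous_primitive (fun a b => intInt hu habs a b) 0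
  have : ∀ t, approx u n t
      = ((n:ℝ)+1) * ((∫ s in (0:ℝ)..(t + ((n:ℝ)+1)⁻¹), u s) - ∫ s in (0:ℝ)..t, u s) := by
    intro t
    rw [integral_interval_sub_left (intInt hu habs 0 _) (intInt hu habs 0 t)]
    rfl
  simp only [funext this]
  exact continuous_const.mul ((hP.comp (continuous_id.add continuous_const)).sub hP)

lemma approx_nonneg (hu : Measurable u) (hu0 : ∀ t, 0 ≤ u t) (huK : ∀ t, u t ≤ K) (n : ℕ)
    (t : ℝ) : 0 ≤ approx u n t := by
  have hδ : (0:ℝ) < ((n:ℝ)+1)⁻¹ := by positivity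
  refine mul_nonneg (by positivity) (integral_nonneg (by linarith) fun s _ => hu0 s)

lemma approx_le (hu : Measurable u) (hu0 : ∀ t, 0 ≤ u t) (huK : ∀ t, u t ≤ K) (n : ℕ)
    (t : ℝ) : approx u n t ≤ K := by
  have habs := abs_bd hu0 huK
  have hδ : (0:ℝ) < ((n:ℝ)+1)⁻¹ := by positivity
  have h1 : (∫ s in t..(t + ((n:ℝ)+1)⁻¹), u s) ≤ ∫ _ in t..(t + ((n:ℝ)+1)⁻¹), K :=
    integral_mono_on (by linarith) (intInt hu habs _ _) intervalIntegrable_const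
      (fun s _ => huK s)
  rw [intervalIntegral.integral_const, smul_eq_mul] at h1
  have : (t + ((n:ℝ)+1)⁻¹ - t) = ((n:ℝ)+1)⁻¹ := by ring
  rw [this] at h1
  calc approx u n t ≤ ((n:ℝ)+1) * (((n:ℝ)+1)⁻¹ * K) := by
        refine mul_le_mul_of_nonneg_left h1 (by positivity)
    _ = K := by field_simp

lemma tendsto_prim (hu : Measurable u) (hu0 : ∀ t, 0 ≤ u t) (huK : ∀ t, u t ≤ K)
    (haet : ∀ᵐ t, Tendsto (fun n : ℕ => approx u n t) atTop (𝓝 (u t)))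
    {t : ℝ} (ht : 0 ≤ t) :
    Tendsto (fun n : ℕ => ∫ s in (0:ℝ)..t, approx u n s) atTop (𝓝 (∫ s in (0:ℝ)..t, u s)) := by
  have habs := abs_bd hu0 huK
  have hK0 : 0 ≤ K := le_trans (hu0 0) (huK 0)
  simp only [integral_of_le ht]
  refine tendsto_integral_of_dominated_convergence (fun _ => K)
    (fun n => ((approx_cont hu hu0 huK n).aestronglyMeasurable).restrict) ?_ ?_ ?_
  · have : IsFiniteMeasure (volume.restrict (Ioc 0 t)) :=
      ⟨by rw [Measure.restrict_apply_univ]; exact measure_Ioc_lt_top⟩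
    exact integrable_const K
  · intro n
    filter_upwards with s
    rw [Real.norm_eq_abs, abs_of_nonneg (approx_nonneg hu hu0 huK n s)]
    exact approx_le hu hu0 huK n s
  · exact ae_restrict_of_ae haet


lemma measKey {u v : ℝ → ℝ} {K L : ℝ} (hu : Measurable u) (hv : Measurable v)
    (hu0 : ∀ t, 0 ≤ u t) (huK : ∀ t, u t ≤ K) (hv0 : ∀ t, 0 ≤ v t) (hvL : ∀ t, v t ≤ L)
    (j : ℕ) {T : ℝ} (hT : 0 ≤ T) :
    ∫ t in (0:ℝ)..T, u t * Real.exp (-(∫ s in (0:ℝ)..t, u s)) * (∫ s in (0:ℝ)..t, v s) ^ j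
      ≤ (j:ℝ) * (∫ t in (0:ℝ)..T, v t * Real.exp (-(∫ s in (0:ℝ)..t, u s))
          * (∫ s in (0:ℝ)..t, v s) ^ (j-1)) + (0:ℝ)^j := by
  have hL0 : 0 ≤ L := le_trans (hv0 0) (hvL 0)
  have haetu := aeTendsto hu (abs_bd hu0 huK) (locInt hu (abs_bd hu0 huK))
  have haetv := aeTendsto hv (abs_bd hv0 hvL) (locInt hv (abs_bd hv0 hvL))
  have hfin : IsFiniteMeasure (volume.restrict (Ioc (0:ℝ) T)) :=
    ⟨by rw [Measure.restrict_apply_univ]; exact measure_Ioc_lt_top⟩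
  -- generic convergence of the approximated integrals
  have conv : ∀ (w : ℝ → ℝ) (W : ℝ), Measurable w → (∀ t, 0 ≤ w t) → (∀ t, w t ≤ W) →
      ∀ m : ℕ, Tendsto (fun n : ℕ => ∫ t in (0:ℝ)..T,
          approx w n t * Real.exp (-(∫ s in (0:ℝ)..t, approx u n s))
            * (∫ s in (0:ℝ)..t, approx v n s) ^ m) atTop
        (𝓝 (∫ t in (0:ℝ)..T,
            w t * Real.exp (-(∫ s in (0:ℝ)..t, u s)) * (∫ s in (0:ℝ)..t, v s) ^ m)) := by
    intro w W hw hw0 hwW m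
    have hW0 : 0 ≤ W := le_trans (hw0 0) (hwW 0)
    have haetw := aeTendsto hw (abs_bd hw0 hwW) (locInt hw (abs_bd hw0 hwW))
    simp only [integral_of_le hT]
    refine tendsto_integral_of_dominated_convergence (fun _ => W * (L*T)^m) ?_ ?_ ?_ ?_
    · intro n
      have hc : Continuous fun t => approx w n t
          * Real.exp (-(∫ s in (0:ℝ)..t, approx u n s))
          * (∫ s in (0:ℝ)..t, approx v n s) ^ m := by
        have hPu : Continuous fun t => ∫ s in (0:ℝ)..t, approx u n s :=
          continuous_primitive
            (fun a b => (approx_cont hu hu0 huK n).intervalIntegrable a b) 0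
        have hPv : Continuous fun t => ∫ s in (0:ℝ)..t, approx v n s :=
          continuous_primitive
            (fun a b => (approx_cont hv hv0 hvL n).intervalIntegrable a b) 0
        exact ((approx_cont hw hw0 hwW n).mul (hPu.neg.rexp)).mul (hPv.pow m)
      exact hc.aestronglyMeasurable.restrict
    · exact integrable_const _
    · intro n
      refine (ae_restrict_iff' measurableSet_Ioc).2 (Eventually.of_forall fun t ht => ?_)
      have ht0 : 0 ≤ t := ht.1.le
      have h1 : 0 ≤ approx w n t := approx_nonneg hw hw0 hwW n t
      have h2 : approx w n t ≤ W := approx_le hw hw0 hwW n t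
      have h3 : (0:ℝ) ≤ ∫ s in (0:ℝ)..t, approx u n s :=
        integral_nonneg ht0 fun s _ => approx_nonneg hu hu0 huK n s
      have hexp : Real.exp (-(∫ s in (0:ℝ)..t, approx u n s)) ≤ 1 := by
        rw [Real.exp_le_one_iff]; linarith
      have h5 : (0:ℝ) ≤ ∫ s in (0:ℝ)..t, approx v n s :=
        integral_nonneg ht0 fun s _ => approx_nonneg hv hv0 hvL n s
      have h6 : (∫ s in (0:ℝ)..t, approx v n s) ≤ L*T := by
        have : (∫ s in (0:ℝ)..t, approx v n s) ≤ ∫ _ in (0:ℝ)..t, L :=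
          integral_mono_on ht0
            ((approx_cont hv hv0 hvL n).intervalIntegrable 0 t) intervalIntegrable_const
            (fun s _ => approx_le hv hv0 hvL n s)
        rw [intervalIntegral.integral_const, smul_eq_mul, sub_zero] at this
        calc (∫ s in (0:ℝ)..t, approx v n s) ≤ t * L := this
          _ ≤ L*T := by rw [mul_comm]; exact mul_le_mul_of_nonneg_left ht.2 hL0
      rw [Real.norm_eq_abs, abs_of_nonneg (by positivity)]
      have hpow : (∫ s in (0:ℝ)..t, approx v n s) ^ m ≤ (L*T)^m := pow_le_pow_left₀ h5 h6 m
      have hexp0 : (0:ℝ) < Real.exp (-(∫ s in (0:ℝ)..t, approx u n s)) := Real.exp_pos _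
      calc approx w n t * Real.exp (-(∫ s in (0:ℝ)..t, approx u n s))
            * (∫ s in (0:ℝ)..t, approx v n s) ^ m
          ≤ W * 1 * (L*T)^m := by
            refine mul_le_mul (mul_le_mul h2 hexp hexp0.le hW0) hpow (by positivity) ?_
            positivity
        _ = W * (L*T)^m := by ring
    · filter_upwards [ae_restrict_of_ae haetw, ae_restrict_mem measurableSet_Ioc]
        with t hwt htmem
      have ht0 : 0 ≤ t := htmem.1.le
      have hU := tendsto_prim hu hu0 huK haetu ht0
      have hV := tendsto_prim hv hv0 hvL haetv ht0
      exact (hwt.mul ((Real.continuous_exp.tendsto _).comp hU.neg)).mul (hV.pow m)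
  have hLn := conv u K hu hu0 huK j
  have hRn := (conv v L hv hv0 hvL (j-1)).const_mul (j:ℝ) |>.add_const ((0:ℝ)^j)
  refine le_of_tendsto_of_tendsto' hLn hRn fun n => ?_
  exact contKey (approx_cont hu hu0 huK n) (approx_cont hv hv0 hvL n)
    (approx_nonneg hu hu0 huK n) (approx_nonneg hv hv0 hvL n) j T hT


lemma lint_Ioi_sup {f : ℝ → ℝ≥0∞} (hf : Measurable f) :
    ∫⁻ t in Ioi (0:ℝ), f t = ⨆ n : ℕ, ∫⁻ t in Ioc (0:ℝ) (n:ℝ), f t := by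
  have h1 : ∀ (s : Set ℝ) (hs : MeasurableSet s), ∫⁻ t in s, f t = ∫⁻ t, s.indicator f t := by
    intro s hs; rw [lintegral_indicator hs]
  rw [h1 _ measurableSet_Ioi]
  have h2 : ∀ n : ℕ, ∫⁻ t in Ioc (0:ℝ) (n:ℝ), f t = ∫⁻ t, (Ioc (0:ℝ) (n:ℝ)).indicator f t :=
    fun n => h1 _ measurableSet_Ioc
  simp_rw [h2]
  rw [← lintegral_iSup]
  · congr 1
    funext t
    by_cases ht : t ∈ Ioi (0:ℝ)
    · rw [indicator_of_mem ht]
      apply le_antisymm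
      · refine le_iSup_of_le ⌈t⌉₊ ?_
        have hmem : t ∈ Ioc (0:ℝ) ((⌈t⌉₊ : ℕ) : ℝ) := ⟨ht, Nat.le_ceil t⟩
        rw [indicator_of_mem hmem]
      · exact iSup_le fun n => by
          by_cases h : t ∈ Ioc (0:ℝ) (n:ℝ)
          · rw [indicator_of_mem h]
          · rw [indicator_of_notMem h]; exact zero_le
    · rw [indicator_of_notMem ht]
      simp only [mem_Ioi, not_lt] at ht
      have : ∀ n : ℕ, (Ioc (0:ℝ) (n:ℝ)).indicator f t = 0 := fun n =>
        indicator_of_notMem (fun hmem => absurd hmem.1 (not_lt.2 ht)) f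
      simp [this]
  · exact fun n => hf.indicator measurableSet_Ioc
  · intro i j hij
    intro t
    exact indicator_le_indicator_of_subset (Ioc_subset_Ioc_right (by exact_mod_cast hij))
      (fun s => zero_le) t

variable {a b : ℝ → ℝ} {K c : ℝ}

/-- the `m j` and `l j` quantities -/
def mm (a b : ℝ → ℝ) (j : ℕ) : ℝ≥0∞ :=
  ∫⁻ t in Ioi (0:ℝ), ENNReal.ofReal (a t * Real.exp (-(∫ s in (0:ℝ)..t, a s))
    * (∫ s in (0:ℝ)..t, |b s|) ^ j)

def ll (a b : ℝ → ℝ) (j : ℕ) : ℝ≥0∞ :=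
  ∫⁻ t in Ioi (0:ℝ), ENNReal.ofReal (|b t| * Real.exp (-(∫ s in (0:ℝ)..t, a s))
    * (∫ s in (0:ℝ)..t, |b s|) ^ j)

lemma meas_base (ha : Measurable a) (hb : Measurable b) (ha0 : ∀ t, 0 ≤ a t)
    (haK : ∀ t, a t ≤ K) (hc : 0 ≤ c) (hba : ∀ t, |b t| ≤ c * a t) :
    Measurable (fun t => Real.exp (-(∫ s in (0:ℝ)..t, a s)))
      ∧ Continuous (fun t => ∫ s in (0:ℝ)..t, |b s|) := by
  have haabs : ∀ t, |a t| ≤ K := fun t => by rw [abs_of_nonneg (ha0 t)]; exact haK t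
  have hbabs : ∀ t, |(|b t|)| ≤ c * K := fun t => by
    rw [abs_abs]
    exact le_trans (hba t) (mul_le_mul_of_nonneg_left (haK t) hc)
  constructor
  · exact (Real.continuous_exp.comp (primCont ha haabs).neg).measurable
  · exact primCont hb.abs hbabs

lemma mm_rec (ha : Measurable a) (hb : Measurable b) (ha0 : ∀ t, 0 ≤ a t)
    (haK : ∀ t, a t ≤ K) (hc : 0 ≤ c) (hba : ∀ t, |b t| ≤ c * a t) (j : ℕ) :
    mm a b j ≤ (j : ℝ≥0∞) * ll a b (j-1) + ENNReal.ofReal ((0:ℝ)^j) := by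
  have hK0 : 0 ≤ K := le_trans (ha0 0) (haK 0)
  have haabs : ∀ t, |a t| ≤ K := fun t => by rw [abs_of_nonneg (ha0 t)]; exact haK t
  have hbK : ∀ t, |b t| ≤ c * K := fun t =>
    le_trans (hba t) (mul_le_mul_of_nonneg_left (haK t) hc)
  obtain ⟨hexp_m, hW_c⟩ := meas_base ha hb ha0 haK hc hba
  have hmeasm : ∀ i : ℕ, Measurable (fun t => ENNReal.ofReal
      (a t * Real.exp (-(∫ s in (0:ℝ)..t, a s)) * (∫ s in (0:ℝ)..t, |b s|) ^ i)) := by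
    intro i
    exact ((ha.mul hexp_m).mul (hW_c.measurable.pow_const i)).ennreal_ofReal
  have hmeasl : ∀ i : ℕ, Measurable (fun t => ENNReal.ofReal
      (|b t| * Real.exp (-(∫ s in (0:ℝ)..t, a s)) * (∫ s in (0:ℝ)..t, |b s|) ^ i)) := by
    intro i
    exact ((hb.abs.mul hexp_m).mul (hW_c.measurable.pow_const i)).ennreal_ofReal
  rw [mm, lint_Ioi_sup (hmeasm j)]
  refine iSup_le fun n => ?_
  -- on `Ioc 0 n`, use `measKey`
  have hT : (0:ℝ) ≤ (n:ℝ) := Nat.cast_nonneg n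
  have hfin : IsFiniteMeasure (volume.restrict (Ioc (0:ℝ) (n:ℝ))) :=
    ⟨by rw [Measure.restrict_apply_univ]; exact measure_Ioc_lt_top⟩
  -- integrability on Ioc 0 n of all these products
  have key : ∀ (w : ℝ → ℝ) (W : ℝ), Measurable w → (∀ t, 0 ≤ w t) → (∀ t, w t ≤ W) →
      ∀ i : ℕ, Integrable (fun t => w t * Real.exp (-(∫ s in (0:ℝ)..t, a s))
        * (∫ s in (0:ℝ)..t, |b s|) ^ i) (volume.restrict (Ioc (0:ℝ) (n:ℝ))) := by
    intro w W hw hw0 hwW i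
    have hmw : Measurable (fun t => w t * Real.exp (-(∫ s in (0:ℝ)..t, a s))
        * (∫ s in (0:ℝ)..t, |b s|) ^ i) :=
      (hw.mul hexp_m).mul (hW_c.measurable.pow_const i)
    have hW0 : 0 ≤ W := le_trans (hw0 0) (hwW 0)
    refine Integrable.mono' (integrable_const (W * (c*K*(n:ℝ))^i))
      hmw.aestronglyMeasurable ?_
    refine (ae_restrict_iff' measurableSet_Ioc).2 (Eventually.of_forall fun t ht => ?_)
    have ht0 : 0 ≤ t := ht.1.le
    have h3 : (0:ℝ) ≤ ∫ s in (0:ℝ)..t, a s := integral_nonneg ht0 fun s _ => ha0 s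
    have hexp : Real.exp (-(∫ s in (0:ℝ)..t, a s)) ≤ 1 := by
      rw [Real.exp_le_one_iff]; linarith
    have h5 : (0:ℝ) ≤ ∫ s in (0:ℝ)..t, |b s| :=
      integral_nonneg ht0 fun s _ => abs_nonneg _
    have h6 : (∫ s in (0:ℝ)..t, |b s|) ≤ c*K*(n:ℝ) := by
      have h7 : (∫ s in (0:ℝ)..t, |b s|) ≤ ∫ _ in (0:ℝ)..t, c*K :=
        integral_mono_on ht0 (intInt hb.abs (fun s => by rw [abs_abs]; exact hbK s) 0 t)
          intervalIntegrable_const (fun s _ => hbK s)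
      rw [intervalIntegral.integral_const, smul_eq_mul, sub_zero] at h7
      refine le_trans h7 ?_
      have hcK : 0 ≤ c * K := mul_nonneg hc hK0
      calc t * (c*K) ≤ (n:ℝ) * (c*K) := mul_le_mul_of_nonneg_right ht.2 hcK
        _ = c*K*(n:ℝ) := by ring
    rw [Real.norm_eq_abs, abs_of_nonneg
      (mul_nonneg (mul_nonneg (hw0 t) (Real.exp_pos _).le) (pow_nonneg h5 i))]
    calc w t * Real.exp (-(∫ s in (0:ℝ)..t, a s)) * (∫ s in (0:ℝ)..t, |b s|) ^ i
        ≤ W * 1 * (c*K*(n:ℝ))^i := by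
          refine mul_le_mul (mul_le_mul (hwW t) hexp (Real.exp_pos _).le hW0)
            (pow_le_pow_left₀ h5 h6 i) (by positivity) (by positivity)
      _ = W * (c*K*(n:ℝ))^i := by ring
  have hIm := key a K ha ha0 haK j
  have hIl := key (fun t => |b t|) (c*K) hb.abs (fun t => abs_nonneg _) hbK (j-1)
  -- convert lintegral over Ioc to interval integral
  have hconv : ∀ (w : ℝ → ℝ), (∀ t, 0 ≤ w t) →
      Integrable (fun t => w t * Real.exp (-(∫ s in (0:ℝ)..t, a s))
        * (∫ s in (0:ℝ)..t, |b s|) ^ j) (volume.restrict (Ioc (0:ℝ) (n:ℝ))) →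
      True := fun _ _ _ => trivial
  have e1 : ∫⁻ t in Ioc (0:ℝ) (n:ℝ), ENNReal.ofReal
        (a t * Real.exp (-(∫ s in (0:ℝ)..t, a s)) * (∫ s in (0:ℝ)..t, |b s|) ^ j)
      = ENNReal.ofReal (∫ t in (0:ℝ)..(n:ℝ),
        a t * Real.exp (-(∫ s in (0:ℝ)..t, a s)) * (∫ s in (0:ℝ)..t, |b s|) ^ j) := by
    rw [integral_of_le hT, ofReal_integral_eq_lintegral_ofReal hIm]
    refine (ae_restrict_iff' measurableSet_Ioc).2 (Eventually.of_forall fun t ht => ?_)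
    have h5 : (0:ℝ) ≤ ∫ s in (0:ℝ)..t, |b s| :=
      integral_nonneg ht.1.le fun s _ => abs_nonneg _
    exact mul_nonneg (mul_nonneg (ha0 t) (Real.exp_pos _).le) (pow_nonneg h5 j)
  have e2 : ∫⁻ t in Ioc (0:ℝ) (n:ℝ), ENNReal.ofReal
        (|b t| * Real.exp (-(∫ s in (0:ℝ)..t, a s)) * (∫ s in (0:ℝ)..t, |b s|) ^ (j-1))
      = ENNReal.ofReal (∫ t in (0:ℝ)..(n:ℝ),
        |b t| * Real.exp (-(∫ s in (0:ℝ)..t, a s)) * (∫ s in (0:ℝ)..t, |b s|) ^ (j-1)) := by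
    rw [integral_of_le hT, ofReal_integral_eq_lintegral_ofReal hIl]
    refine (ae_restrict_iff' measurableSet_Ioc).2 (Eventually.of_forall fun t ht => ?_)
    have h5 : (0:ℝ) ≤ ∫ s in (0:ℝ)..t, |b s| :=
      integral_nonneg ht.1.le fun s _ => abs_nonneg _
    exact mul_nonneg (mul_nonneg (abs_nonneg _) (Real.exp_pos _).le) (pow_nonneg h5 (j-1))
  rw [e1]
  have hmk := measKey (K := K) (L := c*K) ha hb.abs ha0 haK (fun t => abs_nonneg _) hbK j hT
  have hRHSnn : 0 ≤ (j:ℝ) * (∫ t in (0:ℝ)..(n:ℝ), |b t|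
      * Real.exp (-(∫ s in (0:ℝ)..t, a s)) * (∫ s in (0:ℝ)..t, |b s|) ^ (j-1)) := by
    have : 0 ≤ ∫ t in (0:ℝ)..(n:ℝ), |b t| * Real.exp (-(∫ s in (0:ℝ)..t, a s))
        * (∫ s in (0:ℝ)..t, |b s|) ^ (j-1) := by
      refine integral_nonneg hT fun t ht => ?_
      have h5 : (0:ℝ) ≤ ∫ s in (0:ℝ)..t, |b s| :=
        integral_nonneg ht.1 fun s _ => abs_nonneg _
      exact mul_nonneg (mul_nonneg (abs_nonneg _) (Real.exp_pos _).le) (pow_nonneg h5 (j-1))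
    positivity
  calc ENNReal.ofReal (∫ t in (0:ℝ)..(n:ℝ),
        a t * Real.exp (-(∫ s in (0:ℝ)..t, a s)) * (∫ s in (0:ℝ)..t, |b s|) ^ j)
      ≤ ENNReal.ofReal ((j:ℝ) * (∫ t in (0:ℝ)..(n:ℝ), |b t|
          * Real.exp (-(∫ s in (0:ℝ)..t, a s)) * (∫ s in (0:ℝ)..t, |b s|) ^ (j-1))
          + (0:ℝ)^j) := ENNReal.ofReal_le_ofReal hmk
    _ = ENNReal.ofReal ((j:ℝ) * (∫ t in (0:ℝ)..(n:ℝ), |b t|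
          * Real.exp (-(∫ s in (0:ℝ)..t, a s)) * (∫ s in (0:ℝ)..t, |b s|) ^ (j-1)))
        + ENNReal.ofReal ((0:ℝ)^j) := ENNReal.ofReal_add hRHSnn (by positivity)
    _ ≤ (j:ℝ≥0∞) * ENNReal.ofReal (∫ t in (0:ℝ)..(n:ℝ), |b t|
          * Real.exp (-(∫ s in (0:ℝ)..t, a s)) * (∫ s in (0:ℝ)..t, |b s|) ^ (j-1))
        + ENNReal.ofReal ((0:ℝ)^j) := by
          gcongr
          rw [ENNReal.ofReal_mul (by positivity)]
          gcongr
          simp [ENNReal.ofReal_natCast]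
    _ ≤ (j:ℝ≥0∞) * ll a b (j-1) + ENNReal.ofReal ((0:ℝ)^j) := by
          gcongr
          rw [← e2, ll]
          exact lintegral_mono_set Ioc_subset_Ioi_self


lemma ll_le (ha0 : ∀ t, 0 ≤ a t) (hc : 0 ≤ c) (hba : ∀ t, |b t| ≤ c * a t) (j : ℕ) :
    ll a b j ≤ ENNReal.ofReal c * mm a b j := by
  rw [ll, mm, ← lintegral_const_mul' _ _ ENNReal.ofReal_ne_top]
  refine lintegral_mono_ae ((ae_restrict_iff' measurableSet_Ioi).2
    (Eventually.of_forall fun t ht => ?_))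
  have h5 : (0:ℝ) ≤ ∫ s in (0:ℝ)..t, |b s| :=
    integral_nonneg (le_of_lt ht) fun s _ => abs_nonneg _
  rw [← ENNReal.ofReal_mul hc]
  refine ENNReal.ofReal_le_ofReal ?_
  have h1 := mul_le_mul_of_nonneg_right (mul_le_mul_of_nonneg_right (hba t)
    (Real.exp_pos (-(∫ s in (0:ℝ)..t, a s))).le) (pow_nonneg h5 j)
  calc |b t| * Real.exp (-(∫ s in (0:ℝ)..t, a s)) * (∫ s in (0:ℝ)..t, |b s|) ^ j
      ≤ c * a t * Real.exp (-(∫ s in (0:ℝ)..t, a s)) * (∫ s in (0:ℝ)..t, |b s|) ^ j := h1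
    _ = c * (a t * Real.exp (-(∫ s in (0:ℝ)..t, a s)) * (∫ s in (0:ℝ)..t, |b s|) ^ j) := by
        ring

lemma mm_zero (ha : Measurable a) (hb : Measurable b) (ha0 : ∀ t, 0 ≤ a t)
    (haK : ∀ t, a t ≤ K) (hc : 0 ≤ c) (hba : ∀ t, |b t| ≤ c * a t) :
    mm a b 0 ≤ 1 := by
  have := mm_rec ha hb ha0 haK hc hba 0
  simpa using this

lemma ll_zero (ha : Measurable a) (hb : Measurable b) (ha0 : ∀ t, 0 ≤ a t)
    (haK : ∀ t, a t ≤ K) (hc : 0 ≤ c) (hba : ∀ t, |b t| ≤ c * a t) :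
    ll a b 0 ≤ ENNReal.ofReal c := by
  calc ll a b 0 ≤ ENNReal.ofReal c * mm a b 0 := ll_le ha0 hc hba 0
    _ ≤ ENNReal.ofReal c * 1 := by gcongr; exact mm_zero ha hb ha0 haK hc hba
    _ = ENNReal.ofReal c := mul_one _

lemma mm_bound (ha : Measurable a) (hb : Measurable b) (ha0 : ∀ t, 0 ≤ a t)
    (haK : ∀ t, a t ≤ K) (hc : 0 ≤ c) (hba : ∀ t, |b t| ≤ c * a t) :
    ∀ k : ℕ, 1 ≤ k →
      mm a b k ≤ (k.factorial : ℝ≥0∞) * (ENNReal.ofReal c)^(k-1) * ll a b 0 := by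
  intro k hk
  induction k with
  | zero => omega
  | succ n ih =>
    rcases Nat.eq_or_lt_of_le hk with h1 | h1
    · -- n + 1 = 1
      have hn : n = 0 := by omega
      subst hn
      have := mm_rec ha hb ha0 haK hc hba 1
      simpa using this
    · have hn : 1 ≤ n := by omega
      have ihn := ih hn
      calc mm a b (n+1) ≤ ((n+1 : ℕ) : ℝ≥0∞) * ll a b n + ENNReal.ofReal ((0:ℝ)^(n+1)) := by
            simpa using mm_rec ha hb ha0 haK hc hba (n+1)
        _ = ((n+1 : ℕ) : ℝ≥0∞) * ll a b n := by
            rw [zero_pow (Nat.succ_ne_zero n)]; simp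
        _ ≤ ((n+1 : ℕ) : ℝ≥0∞) * (ENNReal.ofReal c * mm a b n) := by
            gcongr; exact ll_le ha0 hc hba n
        _ ≤ ((n+1 : ℕ) : ℝ≥0∞) * (ENNReal.ofReal c *
              ((n.factorial : ℝ≥0∞) * (ENNReal.ofReal c)^(n-1) * ll a b 0)) := by
            gcongr
        _ = (((n+1) * n.factorial : ℕ) : ℝ≥0∞) *
              ((ENNReal.ofReal c)^(n-1) * ENNReal.ofReal c) * ll a b 0 := by
            push_cast; ring
        _ = ((n+1).factorial : ℝ≥0∞) * (ENNReal.ofReal c)^n * ll a b 0 := by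
            rw [← Nat.factorial_succ, ← pow_succ, Nat.sub_add_cancel hn]
        _ = ((n+1).factorial : ℝ≥0∞) * (ENNReal.ofReal c)^((n+1)-1) * ll a b 0 := by rfl


lemma lemD (ha : Measurable a) (hb : Measurable b) (ha0 : ∀ t, 0 ≤ a t)
    (haK : ∀ t, a t ≤ K) (hc : 0 ≤ c) (hba : ∀ t, |b t| ≤ c * a t) (k : ℕ) (hk : 1 ≤ k) :
    Integrable (fun t => Real.exp (-(∫ s in (0:ℝ)..t, a s)) * a t
        * (∫ s in (0:ℝ)..t, b s) ^ k) (volume.restrict (Ioi 0))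
    ∧ Integrable (fun t => Real.exp (-(∫ s in (0:ℝ)..t, a s)) * |b t|)
        (volume.restrict (Ioi 0))
    ∧ (∫ t in Ioi (0:ℝ), Real.exp (-(∫ s in (0:ℝ)..t, a s)) * a t * (∫ s in (0:ℝ)..t, b s) ^ k)
        ≤ (k.factorial : ℝ) * c^(k-1)
          * ∫ t in Ioi (0:ℝ), Real.exp (-(∫ s in (0:ℝ)..t, a s)) * |b t|
    ∧ (∫ t in Ioi (0:ℝ), Real.exp (-(∫ s in (0:ℝ)..t, a s)) * |b t|) ≤ c
    ∧ |∫ t in Ioi (0:ℝ), Real.exp (-(∫ s in (0:ℝ)..t, a s)) * a t * (∫ s in (0:ℝ)..t, b s) ^ k|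
        ≤ (k.factorial : ℝ) * c^k := by
  have hK0 : 0 ≤ K := le_trans (ha0 0) (haK 0)
  have haabs : ∀ t, |a t| ≤ K := fun t => by rw [abs_of_nonneg (ha0 t)]; exact haK t
  have hbK : ∀ t, |b t| ≤ c * K := fun t =>
    le_trans (hba t) (mul_le_mul_of_nonneg_left (haK t) hc)
  have hexp_m : Measurable (fun t => Real.exp (-(∫ s in (0:ℝ)..t, a s))) :=
    (Real.continuous_exp.comp (primCont ha haabs).neg).measurable
  have hW_c : Continuous (fun t => ∫ s in (0:ℝ)..t, |b s|) :=
    primCont hb.abs (fun t => by rw [abs_abs]; exact hbK t)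
  have hB_c : Continuous (fun t => ∫ s in (0:ℝ)..t, b s) :=
    primCont hb hbK
  set e : ℝ → ℝ := fun t => Real.exp (-(∫ s in (0:ℝ)..t, a s)) with he
  set W : ℝ → ℝ := fun t => ∫ s in (0:ℝ)..t, |b s| with hW
  set B : ℝ → ℝ := fun t => ∫ s in (0:ℝ)..t, b s with hB
  set φ : ℝ → ℝ := fun t => a t * e t * W t ^ k with hφ
  set f : ℝ → ℝ := fun t => e t * a t * B t ^ k with hf
  set g : ℝ → ℝ := fun t => e t * |b t| with hg
  have hφm : Measurable φ := (ha.mul hexp_m).mul (hW_c.measurable.pow_const k)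
  have hfm : Measurable f := (hexp_m.mul ha).mul (hB_c.measurable.pow_const k)
  have hgm : Measurable g := hexp_m.mul hb.abs
  have habs : ∀ t, 0 < t → |f t| ≤ φ t := by
    intro t ht
    have hBW : |B t| ≤ W t := by
      have := intervalIntegral.norm_integral_le_integral_norm (f := b) (μ := volume) ht.le
      simpa [Real.norm_eq_abs] using this
    have hW0 : 0 ≤ W t := integral_nonneg ht.le fun s _ => abs_nonneg _
    have : |f t| = e t * a t * |B t| ^ k := by
      rw [hf, abs_mul, abs_mul, abs_pow, abs_of_nonneg (Real.exp_pos _).le,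
        abs_of_nonneg (ha0 t)]
    rw [this, hφ]
    have h1 : |B t| ^ k ≤ W t ^ k := pow_le_pow_left₀ (abs_nonneg _) hBW k
    calc e t * a t * |B t| ^ k ≤ e t * a t * W t ^ k := by
          refine mul_le_mul_of_nonneg_left h1 (mul_nonneg (Real.exp_pos _).le (ha0 t))
      _ = a t * e t * W t ^ k := by ring
  have hφ0 : ∀ t, 0 < t → 0 ≤ φ t := by
    intro t ht
    have hW0 : 0 ≤ W t := integral_nonneg ht.le fun s _ => abs_nonneg _
    exact mul_nonneg (mul_nonneg (ha0 t) (Real.exp_pos _).le) (pow_nonneg hW0 k)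
  -- lintegral identities
  have hmmk : (∫⁻ t in Ioi (0:ℝ), ENNReal.ofReal (φ t)) = mm a b k := rfl
  have hmm_fin : mm a b k ≤ (k.factorial : ℝ≥0∞) * (ENNReal.ofReal c)^(k-1)
      * ENNReal.ofReal c := by
    calc mm a b k ≤ (k.factorial : ℝ≥0∞) * (ENNReal.ofReal c)^(k-1) * ll a b 0 :=
          mm_bound ha hb ha0 haK hc hba k hk
      _ ≤ _ := by gcongr; exact ll_zero ha hb ha0 haK hc hba
  have hmm_ne : mm a b k ≠ ∞ := by
    refine ne_top_of_le_ne_top ?_ hmm_fin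
    exact ENNReal.mul_ne_top (ENNReal.mul_ne_top (ENNReal.natCast_ne_top _)
      (ENNReal.pow_ne_top ENNReal.ofReal_ne_top)) ENNReal.ofReal_ne_top
  have hll0g : (∫⁻ t in Ioi (0:ℝ), ENNReal.ofReal (g t)) = ll a b 0 := by
    rw [ll]
    refine lintegral_congr fun t => ?_
    congr 1
    rw [hg]
    simp only [pow_zero, mul_one]
    ring
  have hll0_ne : ll a b 0 ≠ ∞ :=
    ne_top_of_le_ne_top ENNReal.ofReal_ne_top (ll_zero ha hb ha0 haK hc hba)
  -- integrability
  have hφint : Integrable φ (volume.restrict (Ioi 0)) := by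
    refine ⟨hφm.aestronglyMeasurable, ?_⟩
    rw [hasFiniteIntegral_iff_norm]
    have : (∫⁻ t in Ioi (0:ℝ), ENNReal.ofReal ‖φ t‖)
        = ∫⁻ t in Ioi (0:ℝ), ENNReal.ofReal (φ t) := by
      refine setLIntegral_congr_fun measurableSet_Ioi (fun t ht => ?_)
      rw [Real.norm_eq_abs, abs_of_nonneg (hφ0 t ht)]
    rw [this, hmmk]
    exact lt_of_le_of_ne (le_top) hmm_ne
  have hfint : Integrable f (volume.restrict (Ioi 0)) := by
    refine Integrable.mono' hφint hfm.aestronglyMeasurable ?_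
    refine (ae_restrict_iff' measurableSet_Ioi).2 (Eventually.of_forall fun t ht => ?_)
    rw [Real.norm_eq_abs]
    exact habs t ht
  have hgint : Integrable g (volume.restrict (Ioi 0)) := by
    refine ⟨hgm.aestronglyMeasurable, ?_⟩
    rw [hasFiniteIntegral_iff_norm]
    have : (∫⁻ t in Ioi (0:ℝ), ENNReal.ofReal ‖g t‖)
        = ∫⁻ t in Ioi (0:ℝ), ENNReal.ofReal (g t) := by
      refine lintegral_congr fun t => ?_
      rw [Real.norm_eq_abs, hg, abs_mul, abs_of_nonneg (Real.exp_pos _).le, abs_abs]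
    rw [this, hll0g]
    exact lt_of_le_of_ne (le_top) hll0_ne
  -- integral identities
  have hφval : (∫ t in Ioi (0:ℝ), φ t) = (mm a b k).toReal := by
    rw [integral_eq_lintegral_of_nonneg_ae ((ae_restrict_iff' measurableSet_Ioi).2
      (Eventually.of_forall fun t ht => hφ0 t ht)) hφm.aestronglyMeasurable, hmmk]
  have hgval : (∫ t in Ioi (0:ℝ), g t) = (ll a b 0).toReal := by
    rw [integral_eq_lintegral_of_nonneg_ae (Eventually.of_forall fun t =>
      mul_nonneg (Real.exp_pos _).le (abs_nonneg _)) hgm.aestronglyMeasurable, hll0g]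
  have hg0 : 0 ≤ ∫ t in Ioi (0:ℝ), g t := by
    rw [hgval]; exact ENNReal.toReal_nonneg
  -- main bound
  have hmain : (∫ t in Ioi (0:ℝ), f t) ≤ (k.factorial : ℝ) * c^(k-1) * ∫ t in Ioi (0:ℝ), g t := by
    have h1 : (∫ t in Ioi (0:ℝ), f t) ≤ ∫ t in Ioi (0:ℝ), φ t := by
      refine integral_mono_ae hfint hφint ((ae_restrict_iff' measurableSet_Ioi).2
        (Eventually.of_forall fun t ht => le_trans (le_abs_self _) (habs t ht)))
    have h2 : (mm a b k).toReal
        ≤ ((k.factorial : ℝ≥0∞) * (ENNReal.ofReal c)^(k-1) * ll a b 0).toReal := by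
      refine ENNReal.toReal_mono ?_ (mm_bound ha hb ha0 haK hc hba k hk)
      exact ENNReal.mul_ne_top (ENNReal.mul_ne_top (ENNReal.natCast_ne_top _)
        (ENNReal.pow_ne_top ENNReal.ofReal_ne_top)) hll0_ne
    have h3 : ((k.factorial : ℝ≥0∞) * (ENNReal.ofReal c)^(k-1) * ll a b 0).toReal
        = (k.factorial : ℝ) * c^(k-1) * (ll a b 0).toReal := by
      rw [ENNReal.toReal_mul, ENNReal.toReal_mul, ENNReal.toReal_pow,
        ENNReal.toReal_natCast, ENNReal.toReal_ofReal hc]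
    calc (∫ t in Ioi (0:ℝ), f t) ≤ ∫ t in Ioi (0:ℝ), φ t := h1
      _ = (mm a b k).toReal := hφval
      _ ≤ (k.factorial : ℝ) * c^(k-1) * (ll a b 0).toReal := by rw [← h3]; exact h2
      _ = (k.factorial : ℝ) * c^(k-1) * ∫ t in Ioi (0:ℝ), g t := by rw [hgval]
  have hgbd : (∫ t in Ioi (0:ℝ), g t) ≤ c := by
    rw [hgval]
    calc (ll a b 0).toReal ≤ (ENNReal.ofReal c).toReal :=
          ENNReal.toReal_mono ENNReal.ofReal_ne_top (ll_zero ha hb ha0 haK hc hba)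
      _ = c := ENNReal.toReal_ofReal hc
  have hfabs : |∫ t in Ioi (0:ℝ), f t| ≤ (k.factorial : ℝ) * c^k := by
    have h1 : |∫ t in Ioi (0:ℝ), f t| ≤ ∫ t in Ioi (0:ℝ), |f t| := by
      simpa [Real.norm_eq_abs] using
        norm_integral_le_integral_norm (μ := volume.restrict (Ioi 0)) f
    have h2 : (∫ t in Ioi (0:ℝ), |f t|) ≤ ∫ t in Ioi (0:ℝ), φ t := by
      refine integral_mono_ae hfint.abs hφint ((ae_restrict_iff' measurableSet_Ioi).2
        (Eventually.of_forall fun t ht => habs t ht))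
    have h4 : ((k.factorial : ℝ≥0∞) * (ENNReal.ofReal c)^(k-1) * ENNReal.ofReal c).toReal
        = (k.factorial : ℝ) * c^k := by
      rw [ENNReal.toReal_mul, ENNReal.toReal_mul, ENNReal.toReal_pow,
        ENNReal.toReal_natCast, ENNReal.toReal_ofReal hc,
        mul_assoc, ← pow_succ, Nat.sub_add_cancel hk]
    calc |∫ t in Ioi (0:ℝ), f t| ≤ ∫ t in Ioi (0:ℝ), |f t| := h1
      _ ≤ ∫ t in Ioi (0:ℝ), φ t := h2
      _ = (mm a b k).toReal := hφval
      _ ≤ ((k.factorial : ℝ≥0∞) * (ENNReal.ofReal c)^(k-1) * ENNReal.ofReal c).toReal := by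
          refine ENNReal.toReal_mono ?_ hmm_fin
          exact ENNReal.mul_ne_top (ENNReal.mul_ne_top (ENNReal.natCast_ne_top _)
            (ENNReal.pow_ne_top ENNReal.ofReal_ne_top)) ENNReal.ofReal_ne_top
      _ = (k.factorial : ℝ) * c^k := h4
  exact ⟨hfint, hgint, hmain, hgbd, hfabs⟩


end Stmt16Aux

open Stmt16Aux in
/-- Corollary A.4.  In the setting of Lemma A.2, if `h` is bounded
measurable with `q₀ := inf {q z : z ∈ supp h} > 0`, then for all `k ∈ ℕ*`,
`E^x (∫_0^{T_1} h(X_s) ds)^k ≤ (k! ‖h‖_∞^{k−1} / q₀^{k−1}) · R_q* |h| (x)`. -/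
theorem stmt16 {E Ω Ω' : Type*} [MeasurableSpace E] [MeasurableSpace Ω] [MeasurableSpace Ω']
    (Pr : E → Measure Ω) (hPr : ∀ x, IsProbabilityMeasure (Pr x))
    (Prs : E → Measure Ω') (hPrs : ∀ x, IsProbabilityMeasure (Prs x))
    (X : ℝ → Ω → E) (hX : Measurable fun p : ℝ × Ω => X p.1 p.2)
    (Xs : ℝ → Ω' → E) (hXs : Measurable fun p : ℝ × Ω' => Xs p.1 p.2)
    (q : E → ℝ) (hq : Measurable q) (hq0' : ∀ z, 0 ≤ q z) (hqb : ∃ M, ∀ z, q z ≤ M)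
    (T1 : Ω → ℝ) (hT1meas : Measurable T1) (hT1pos : ∀ ω, 0 < T1 ω)
    -- killing representation for path functionals of product form (as in Corollary A.3):
    (hrep : ∀ (x : E) (k : ℕ) (g : Fin k → E → ℝ), (∀ j, Measurable (g j)) →
      ∫ ω, (∏ j : Fin k, ∫ s in (0 : ℝ)..(T1 ω), g j (X s ω)) ∂(Pr x)
        = ∫ ω', (∫ t in Set.Ioi (0 : ℝ),
            Real.exp (-(∫ u in (0 : ℝ)..t, q (Xs u ω'))) * q (Xs t ω') *
              ∏ j : Fin k, ∫ s in (0 : ℝ)..t, g j (Xs s ω'))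
          ∂(Prs x))
    (h : E → ℝ) (hhmeas : Measurable h) (hhbd : ∃ M, ∀ z, |h z| ≤ M)
    -- `q₀ = inf_{z ∈ supp h} q z > 0`:
    (hq0 : 0 < ⨅ z : Function.support h, q (z : E)) :
    ∀ (x : E) (k : ℕ), 1 ≤ k →
      ∫ ω, (∫ s in (0 : ℝ)..(T1 ω), h (X s ω)) ^ k ∂(Pr x)
        ≤ ((k.factorial : ℝ) * (⨆ z : E, |h z|) ^ (k - 1)
              / (⨅ z : Function.support h, q (z : E)) ^ (k - 1)) *
            ∫ ω', (∫ t in Set.Ioi (0 : ℝ),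
                Real.exp (-(∫ u in (0 : ℝ)..t, q (Xs u ω'))) * |h (Xs t ω')|)
              ∂(Prs x) := by
  intro x k hk
  obtain ⟨Kq, hKq⟩ := hqb
  obtain ⟨Mh, hMh⟩ := hhbd
  set q₀ : ℝ := ⨅ z : Function.support h, q (z : E) with hq₀def
  set M : ℝ := ⨆ z : E, |h z| with hMdef
  -- support is nonempty
  have hsupp : Nonempty (Function.support h) := by
    by_contra hne
    rw [not_nonempty_iff] at hne
    rw [hq₀def] at hq0
    rw [Real.iInf_of_isEmpty] at hq0
    exact lt_irrefl 0 hq0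
  obtain ⟨z₀, hz₀⟩ := hsupp
  have hbddA : BddAbove (range fun z : E => |h z|) := by
    refine ⟨Mh, ?_⟩
    rintro _ ⟨z, rfl⟩
    exact hMh z
  have hbddB : BddBelow (range fun z : Function.support h => q (z : E)) := by
    refine ⟨0, ?_⟩
    rintro _ ⟨z, rfl⟩
    exact hq0' _
  have hM0 : 0 ≤ M := le_trans (abs_nonneg _) (le_ciSup hbddA z₀)
  set c : ℝ := M / q₀ with hcdef
  have hc0 : 0 ≤ c := div_nonneg hM0 hq0.le
  have hcq : ∀ z, |h z| ≤ c * q z := by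
    intro z
    by_cases hz : h z = 0
    · rw [hz, abs_zero]
      exact mul_nonneg hc0 (hq0' z)
    · have hzs : z ∈ Function.support h := hz
      have h1 : q₀ ≤ q z := ciInf_le hbddB ⟨z, hzs⟩
      have h2 : |h z| ≤ M := le_ciSup hbddA z
      have h3 : c * q₀ = M := by
        rw [hcdef]; field_simp
      calc |h z| ≤ M := h2
        _ = c * q₀ := h3.symm
        _ ≤ c * q z := mul_le_mul_of_nonneg_left h1 hc0
  -- per ω' path functions
  have hpathm : ∀ ω' : Ω', Measurable fun t : ℝ => Xs t ω' := by
    intro ω'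
    exact hXs.comp (measurable_id.prodMk measurable_const)
  -- lemD instances at each ω'
  have hD := fun ω' : Ω' => lemD (a := fun t => q (Xs t ω')) (b := fun t => h (Xs t ω'))
    (hq.comp (hpathm ω')) (hhmeas.comp (hpathm ω')) (fun t => hq0' _) (fun t => hKq _)
    hc0 (fun t => hcq _) k hk
  -- joint measurability of inner integrals
  have hpath2 : Measurable fun r : Ω' × ℝ => Xs r.2 r.1 :=
    hXs.comp (measurable_snd.prodMk measurable_fst)
  set Aint : Ω' × ℝ → ℝ :=
    fun r => ∫ s, (if 0 < s ∧ s ≤ r.2 then q (Xs s r.1) else 0) with hAintdef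
  set Bint : Ω' × ℝ → ℝ :=
    fun r => ∫ s, (if 0 < s ∧ s ≤ r.2 then h (Xs s r.1) else 0) with hBintdef
  have hcond : MeasurableSet {rr : (Ω' × ℝ) × ℝ | 0 < rr.2 ∧ rr.2 ≤ rr.1.2} := by
    refine (measurableSet_lt measurable_const measurable_snd).inter ?_
    exact measurableSet_le measurable_snd (measurable_snd.comp measurable_fst)
  have hpath3 : Measurable fun rr : (Ω' × ℝ) × ℝ => Xs rr.2 rr.1.1 :=
    hXs.comp (measurable_snd.prodMk (measurable_fst.comp measurable_fst))
  have hAsm : StronglyMeasurable Aint := by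
    refine StronglyMeasurable.integral_prod_right'
      (f := fun rr : (Ω' × ℝ) × ℝ => if 0 < rr.2 ∧ rr.2 ≤ rr.1.2 then q (Xs rr.2 rr.1.1) else 0)
      ?_
    exact (Measurable.ite hcond (hq.comp hpath3) measurable_const).stronglyMeasurable
  have hBsm : StronglyMeasurable Bint := by
    refine StronglyMeasurable.integral_prod_right'
      (f := fun rr : (Ω' × ℝ) × ℝ => if 0 < rr.2 ∧ rr.2 ≤ rr.1.2 then h (Xs rr.2 rr.1.1) else 0)
      ?_
    exact (Measurable.ite hcond (hhmeas.comp hpath3) measurable_const).stronglyMeasurable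
  have hrel : ∀ (w : E → ℝ), ∀ (ω' : Ω') (t : ℝ), 0 < t →
      (∫ u in (0:ℝ)..t, w (Xs u ω')) = ∫ s, (if 0 < s ∧ s ≤ t then w (Xs s ω') else 0) := by
    intro w ω' t ht
    rw [integral_of_le ht.le, ← MeasureTheory.integral_indicator measurableSet_Ioc]
    refine integral_congr_ae (Eventually.of_forall fun s => ?_)
    rw [Set.indicator_apply]
    simp [mem_Ioc]
  -- the two ω'-functions and their strong measurability
  set J : Ω' × ℝ → ℝ :=
    fun r => Real.exp (-(Aint r)) * q (Xs r.2 r.1) * (Bint r) ^ k with hJdef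
  set Jg : Ω' × ℝ → ℝ :=
    fun r => Real.exp (-(Aint r)) * |h (Xs r.2 r.1)| with hJgdef
  have hJm : Measurable J := by
    refine ((Measurable.mul ?_ (hq.comp hpath2)).mul (hBsm.measurable.pow_const k))
    exact Real.continuous_exp.measurable.comp hAsm.measurable.neg
  have hJgm : Measurable Jg := by
    refine Measurable.mul ?_ (hhmeas.comp hpath2).abs
    exact Real.continuous_exp.measurable.comp hAsm.measurable.neg
  have hFFsm : StronglyMeasurable fun ω' => ∫ t, J (ω', t) ∂(volume.restrict (Ioi 0)) :=
    hJm.stronglyMeasurable.integral_prod_right'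
  have hGGsm : StronglyMeasurable fun ω' => ∫ t, Jg (ω', t) ∂(volume.restrict (Ioi 0)) :=
    hJgm.stronglyMeasurable.integral_prod_right'
  -- identification with the actual integrands
  have hFFeq : ∀ ω' : Ω',
      (∫ t in Ioi (0:ℝ), Real.exp (-(∫ u in (0:ℝ)..t, q (Xs u ω'))) * q (Xs t ω')
        * (∫ s in (0:ℝ)..t, h (Xs s ω')) ^ k)
      = ∫ t, J (ω', t) ∂(volume.restrict (Ioi 0)) := by
    intro ω'
    refine setIntegral_congr_fun measurableSet_Ioi (fun t ht => ?_)
    have ht0 : (0:ℝ) < t := ht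
    have hA' : Aint (ω', t) = ∫ u in (0:ℝ)..t, q (Xs u ω') := (hrel q ω' t ht0).symm
    have hB' : Bint (ω', t) = ∫ s in (0:ℝ)..t, h (Xs s ω') := (hrel h ω' t ht0).symm
    show Real.exp (-(∫ u in (0:ℝ)..t, q (Xs u ω'))) * q (Xs t ω')
        * (∫ s in (0:ℝ)..t, h (Xs s ω')) ^ k
      = Real.exp (-(Aint (ω', t))) * q (Xs t ω') * (Bint (ω', t)) ^ k
    rw [hA', hB']
  have hGGeq : ∀ ω' : Ω',
      (∫ t in Ioi (0:ℝ), Real.exp (-(∫ u in (0:ℝ)..t, q (Xs u ω'))) * |h (Xs t ω')|)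
      = ∫ t, Jg (ω', t) ∂(volume.restrict (Ioi 0)) := by
    intro ω'
    refine setIntegral_congr_fun measurableSet_Ioi (fun t ht => ?_)
    have ht0 : (0:ℝ) < t := ht
    have hA' : Aint (ω', t) = ∫ u in (0:ℝ)..t, q (Xs u ω') := (hrel q ω' t ht0).symm
    show Real.exp (-(∫ u in (0:ℝ)..t, q (Xs u ω'))) * |h (Xs t ω')|
      = Real.exp (-(Aint (ω', t))) * |h (Xs t ω')|
    rw [hA']
  -- integrability over Prs x
  have hprob := hPrs x
  have hFFint : Integrable (fun ω' => ∫ t in Ioi (0:ℝ),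
      Real.exp (-(∫ u in (0:ℝ)..t, q (Xs u ω'))) * q (Xs t ω')
        * (∫ s in (0:ℝ)..t, h (Xs s ω')) ^ k) (Prs x) := by
    refine Integrable.mono' (integrable_const ((k.factorial : ℝ) * c^k)) ?_ ?_
    · exact hFFsm.aestronglyMeasurable.congr
        (Eventually.of_forall fun ω' => (hFFeq ω').symm)
    · refine Eventually.of_forall fun ω' => ?_
      rw [Real.norm_eq_abs]
      exact (hD ω').2.2.2.2
  have hGGint : Integrable (fun ω' => ∫ t in Ioi (0:ℝ),
      Real.exp (-(∫ u in (0:ℝ)..t, q (Xs u ω'))) * |h (Xs t ω')|) (Prs x) := by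
    refine Integrable.mono' (integrable_const c) ?_ ?_
    · exact hGGsm.aestronglyMeasurable.congr
        (Eventually.of_forall fun ω' => (hGGeq ω').symm)
    · refine Eventually.of_forall fun ω' => ?_
      rw [Real.norm_eq_abs]
      have h1 := (hD ω').2.2.2.1
      have h2 : 0 ≤ ∫ t in Ioi (0:ℝ),
          Real.exp (-(∫ u in (0:ℝ)..t, q (Xs u ω'))) * |h (Xs t ω')| := by
        refine setIntegral_nonneg measurableSet_Ioi fun t _ => ?_
        exact mul_nonneg (Real.exp_pos _).le (abs_nonneg _)
      rw [abs_of_nonneg h2]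
      exact h1
  -- apply the representation
  have hrep' := hrep x k (fun _ => h) (fun _ => hhmeas)
  simp only [Finset.prod_const, Finset.card_univ, Fintype.card_fin] at hrep'
  rw [hrep']
  have hco : (k.factorial : ℝ) * M ^ (k-1) / q₀ ^ (k-1) = (k.factorial : ℝ) * c^(k-1) := by
    rw [hcdef, div_pow]
    ring
  rw [hco]
  calc ∫ ω', (∫ t in Ioi (0:ℝ),
          Real.exp (-(∫ u in (0:ℝ)..t, q (Xs u ω'))) * q (Xs t ω')
            * (∫ s in (0:ℝ)..t, h (Xs s ω')) ^ k) ∂(Prs x)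
      ≤ ∫ ω', ((k.factorial : ℝ) * c^(k-1)) * (∫ t in Ioi (0:ℝ),
          Real.exp (-(∫ u in (0:ℝ)..t, q (Xs u ω'))) * |h (Xs t ω')|) ∂(Prs x) := by
        refine integral_mono hFFint (hGGint.const_mul _) fun ω' => ?_
        exact (hD ω').2.2.1
    _ = ((k.factorial : ℝ) * c^(k-1)) * ∫ ω', (∫ t in Ioi (0:ℝ),
          Real.exp (-(∫ u in (0:ℝ)..t, q (Xs u ω'))) * |h (Xs t ω')|) ∂(Prs x) :=
        integral_const_mul _ _
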